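/- Let σ be a regular Borel probability measure on a locally compact Hausdorff topological group G such that σ ⋆ σ = σ (σ is idempotent under convolution). Then the support of σ is a compact subgroup K of G and σ is the normalized Haar measure of K. -/

import Mathlib

open MeasureTheory

open Set Filter Topology
open scoped ENNReal
set_option linter.unusedSectionVars false
set_option maxHeartbeats 1000000

section KIaux
variable {G : Type*} [Group G] [TopologicalSpace G] [IsTopologicalGroup G]
    [LocallyCompactSpace G] [T2Space G] [MeasurableSpace G] [BorelSpace G]

/-- The support of a measure. -/
def KIsupp (σ : Measure G) : Set G := {x | ∀ U : Set G, IsOpen U → x ∈ U → 0 < σ U}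

theorem KIsupp_isClosed (σ : Measure G) : IsClosed (KIsupp σ) := by
  rw [← isOpen_compl_iff, isOpen_iff_mem_nhds]
  intro x hx
  simp only [mem_compl_iff, KIsupp, mem_setOf_eq, not_forall] at hx
  obtain ⟨U, hUo, hxU, hU0⟩ := hx
  have hU0 : σ U = 0 := by simpa using hU0
  exact mem_nhds_iff.2 ⟨U, fun y hy h => absurd (h U hUo hy) (by simp [hU0]), hUo, hxU⟩

theorem KIsupp_compl_null (σ : Measure G) [IsFiniteMeasure σ] [σ.Regular] :
    σ (KIsupp σ)ᶜ = 0 := by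
  by_contra h0
  obtain ⟨K, hKsub, hKc, hKpos⟩ :=
    Measure.Regular.innerRegular (μ := σ) (KIsupp_isClosed σ).isOpen_compl 0
      (pos_iff_ne_zero.2 h0)
  have hcov : ∀ k : G, k ∈ K → ∃ U : Set G, IsOpen U ∧ k ∈ U ∧ σ U = 0 := by
    intro k hk
    have := hKsub hk
    simp only [mem_compl_iff, KIsupp, mem_setOf_eq, not_forall] at this
    obtain ⟨U, hUo, hkU, hU0⟩ := this
    exact ⟨U, hUo, hkU, by simpa using hU0⟩
  choose! U hUo hkU hU0 using hcov
  obtain ⟨t, ht⟩ := hKc.elim_finite_subcover (fun k : K => U k)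
    (fun k => hUo k k.2) (fun x hx => mem_iUnion.2 ⟨⟨x, hx⟩, hkU x hx⟩)
  have h1 : σ K ≤ ∑ i ∈ t, σ (U i) := le_trans (measure_mono ht) (measure_biUnion_finset_le t _)
  have h2 : σ K = 0 := le_antisymm (le_trans h1 (le_of_eq
    (Finset.sum_eq_zero fun i _ => hU0 i i.2))) zero_le
  exact absurd hKpos (by simp [h2])

/-- upper semicontinuity of `y ↦ σ (y⁻¹ C)` for compact `C`. -/
theorem KIusc (σ : Measure G) [σ.Regular] {C : Set G} (hC : IsCompact C)
    {t : ℝ≥0∞} {a : G} (h : σ {b | a * b ∈ C} < t) :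
    ∀ᶠ a' in 𝓝 a, σ {b | a' * b ∈ C} < t := by
  have hTm : MeasurableSet {b | a * b ∈ C} :=
    (continuous_mul_left a).measurable hC.isClosed.measurableSet
  obtain ⟨U, hTU, hUo, hUt⟩ := Measure.OuterRegular.outerRegular (μ := σ) hTm t h
  have hCU' : C ⊆ (fun c => a⁻¹ * c) ⁻¹' U := by
    intro c hc
    exact hTU (show a * (a⁻¹ * c) ∈ C by simpa using hc)
  obtain ⟨V, hV1, hVC⟩ := compact_open_separated_mul_left hC
    (hUo.preimage (continuous_mul_left a⁻¹)) hCU'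
  have hW : (fun a' => a * a'⁻¹) ⁻¹' V ∈ 𝓝 a := by
    have hcont : ContinuousAt (fun a' : G => a * a'⁻¹) a :=
      ((continuous_mul_left a).comp continuous_inv).continuousAt
    apply hcont.preimage_mem_nhds
    simpa using hV1
  filter_upwards [hW] with a' ha'
  refine lt_of_le_of_lt (measure_mono ?_) hUt
  intro b hb
  have : (a * a'⁻¹) * (a' * b) ∈ (fun c => a⁻¹ * c) ⁻¹' U := hVC (mul_mem_mul ha' hb)
  simpa [mul_assoc] using this

theorem KIclosed_superlevel (σ : Measure G) [σ.Regular] {C : Set G} (hC : IsCompact C)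
    (t : ℝ≥0∞) : IsClosed {y : G | t ≤ σ {b | y * b ∈ C}} := by
  rw [← isOpen_compl_iff, isOpen_iff_mem_nhds]
  intro a ha
  simp only [mem_compl_iff, mem_setOf_eq, not_le] at ha
  have := KIusc σ hC ha
  exact this.mono fun a' h => by simpa [mem_compl_iff, not_le] using h

theorem KIattain (σ : Measure G) [σ.Regular] {C : Set G} (hC : IsCompact C)
    {F : Set G} (hF : IsCompact F) (hFne : F.Nonempty) :
    ∃ y₀ ∈ F, ∀ y ∈ F, σ {b | y * b ∈ C} ≤ σ {b | y₀ * b ∈ C} := by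
  set u : G → ℝ≥0∞ := fun y => σ {b | y * b ∈ C} with hu
  set M : ℝ≥0∞ := sSup (u '' F) with hM
  rcases eq_or_lt_of_le (zero_le : (0:ℝ≥0∞) ≤ M) with hM0 | hMpos
  · obtain ⟨y₀, hy₀⟩ := hFne
    refine ⟨y₀, hy₀, fun y hy => ?_⟩
    have h1 : u y ≤ M := le_sSup (mem_image_of_mem u hy)
    rw [← hM0, nonpos_iff_eq_zero] at h1
    rw [show σ {b | y * b ∈ C} = u y from rfl, h1]
    exact zero_le
  · have key : (⋂ r : {r : ℝ≥0∞ // r < M}, (F ∩ {y | r.1 ≤ u y})).Nonempty := by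
      haveI : Nonempty {r : ℝ≥0∞ // r < M} := ⟨⟨0, hMpos⟩⟩
      apply IsCompact.nonempty_iInter_of_directed_nonempty_isCompact_isClosed
      · rintro ⟨r, hr⟩ ⟨s, hs⟩
        refine ⟨⟨max r s, max_lt hr hs⟩, ?_, ?_⟩
        · intro y hy
          exact ⟨hy.1, le_trans (le_max_left r s) hy.2⟩
        · intro y hy
          exact ⟨hy.1, le_trans (le_max_right r s) hy.2⟩
      · rintro ⟨r, hr⟩
        obtain ⟨v, ⟨y, hyF, rfl⟩, hrv⟩ := lt_sSup_iff.1 hr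
        exact ⟨y, hyF, le_of_lt hrv⟩
      · rintro ⟨r, hr⟩
        exact hF.inter_right (KIclosed_superlevel σ hC r)
      · rintro ⟨r, hr⟩
        exact (hF.inter_right (KIclosed_superlevel σ hC r)).isClosed
    obtain ⟨y₀, hy₀⟩ := key
    have hy₀F : y₀ ∈ F := (mem_iInter.1 hy₀ ⟨0, hMpos⟩).1
    have hMle : M ≤ u y₀ := by
      apply le_of_forall_lt_imp_le_of_dense
      intro r hr
      exact (mem_iInter.1 hy₀ ⟨r, hr⟩).2
    exact ⟨y₀, hy₀F, fun y hy => le_trans (le_sSup (mem_image_of_mem u hy)) hMle⟩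
end KIaux

/-- Kawada–Itô: a regular Borel probability measure `σ` on a locally compact Hausdorff
topological group `G` which is idempotent under convolution (`σ ⋆ σ = σ`) is the
normalized Haar measure of a compact subgroup `K`, and the support of `σ` is `K`:
`σ K = 1`, `σ` is invariant under left translation by elements of `K`, and every open
set meeting `K` has positive measure. -/
theorem idempotent_probability_is_haar_of_compact_subgroup
    {G : Type*} [Group G] [TopologicalSpace G] [IsTopologicalGroup G]
    [LocallyCompactSpace G] [T2Space G]
    [MeasurableSpace G] [BorelSpace G]
    (σ : Measure G) [IsProbabilityMeasure σ] [σ.Regular]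
    (hconv : (σ.prod σ).map (fun p : G × G => p.1 * p.2) = σ) :
    ∃ K : Subgroup G, IsCompact (K : Set G) ∧
      σ (K : Set G) = 1 ∧
      (∀ g ∈ K, σ.map (fun x => g * x) = σ) ∧
      (∀ U : Set G, IsOpen U → (U ∩ (K : Set G)).Nonempty → 0 < σ U) ∧
      σ ((K : Set G)ᶜ) = 0 := by
  classical
  set S : Set G := KIsupp σ with hSdef
  have hScl : IsClosed S := KIsupp_isClosed σ
  have hSm : MeasurableSet S := hScl.measurableSet
  have hScompl : σ Sᶜ = 0 := KIsupp_compl_null σ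
  have hSone : σ S = 1 := by
    have := measure_add_measure_compl (μ := σ) hSm
    rw [hScompl, add_zero] at this
    simpa using this
  have hSne : S.Nonempty := by
    rcases Set.eq_empty_or_nonempty S with h | h
    · exfalso
      rw [h] at hSone
      simp at hSone
    · exact h
  have hSae : ∀ᵐ a ∂σ, a ∈ S := by
    rw [MeasureTheory.ae_iff]
    exact hScompl
  -- a.e.-measurable version of multiplication
  have hmul_ae : AEMeasurable (fun p : G × G => p.1 * p.2) (σ.prod σ) := by
    by_contra h
    rw [Measure.map_of_not_aemeasurable h] at hconv
    have : (0 : Measure G) Set.univ = σ Set.univ := by rw [hconv]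
    simp [measure_univ] at this
  set g : G × G → G := hmul_ae.mk _ with hgdef
  have hgmeas : Measurable g := hmul_ae.measurable_mk
  have hgae : (fun p : G × G => p.1 * p.2) =ᵐ[σ.prod σ] g := hmul_ae.ae_eq_mk
  have hconv' : (σ.prod σ).map g = σ := by rw [← Measure.map_congr hgae]; exact hconv
  -- S is closed under multiplication
  have hmulS : ∀ x ∈ S, ∀ y ∈ S, x * y ∈ S := by
    intro x hx y hy U hU hxyU
    have hmemU : (fun p : G × G => p.1 * p.2) ⁻¹' U ∈ 𝓝 (x, y) :=
      (continuous_mul.continuousAt (x := (x, y))).preimage_mem_nhds (hU.mem_nhds hxyU)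
    rw [mem_nhds_prod_iff] at hmemU
    obtain ⟨V, hV, W, hW, hVW⟩ := hmemU
    obtain ⟨V', hV'V, hV'o, hxV'⟩ := mem_nhds_iff.1 hV
    obtain ⟨W', hW'W, hW'o, hyW'⟩ := mem_nhds_iff.1 hW
    set N : Set (G × G) := {p | ¬ p.1 * p.2 = g p} with hN
    have hNnull : (σ.prod σ) N = 0 := MeasureTheory.ae_iff.1 hgae
    have hsub : (V' ×ˢ W') \ N ⊆ g ⁻¹' U := by
      rintro ⟨a, b⟩ ⟨⟨ha, hb⟩, hn⟩
      simp only [hN, mem_setOf_eq, not_not] at hn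
      have : a * b ∈ U := hVW (Set.mk_mem_prod (hV'V ha) (hW'W hb))
      simpa [← hn] using this
    have hUσ : σ U = (σ.prod σ) (g ⁻¹' U) := by
      rw [← Measure.map_apply hgmeas hU.measurableSet, hconv']
    rw [hUσ]
    calc (0:ℝ≥0∞) < σ V' * σ W' :=
          ENNReal.mul_pos (ne_of_gt (hx V' hV'o hxV')) (ne_of_gt (hy W' hW'o hyW'))
      _ = (σ.prod σ) (V' ×ˢ W') := (Measure.prod_prod V' W').symm
      _ = (σ.prod σ) ((V' ×ˢ W') \ N) := (measure_diff_null hNnull).symm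
      _ ≤ (σ.prod σ) (g ⁻¹' U) := measure_mono hsub
  -- harmonicity machinery
  have hsect : ∀ᵐ a ∂σ, ∀ T : Set G, σ {b | g (a, b) ∈ T} = σ {b | a * b ∈ T} := by
    filter_upwards [Measure.ae_ae_of_ae_prod hgae] with a ha
    intro T
    apply measure_congr
    rw [Filter.eventuallyEq_set]
    filter_upwards [ha] with b hb
    simp only [mem_setOf_eq, hb]
  have harm : ∀ T : Set G, MeasurableSet T →
      σ T = ∫⁻ a, σ {b | g (a, b) ∈ T} ∂σ := by
    intro T hT
    have h1 : σ T = (σ.prod σ) (g ⁻¹' T) := by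
      rw [← Measure.map_apply hgmeas hT, hconv']
    rw [h1, Measure.prod_apply (hgmeas hT)]
    rfl
  -- the core maximum principle
  have core : ∀ (C : Set G), IsCompact C → ∀ (y₀ : G),
      (∀ z ∈ S, σ {b | (y₀ * z) * b ∈ C} ≤ σ {b | y₀ * b ∈ C}) →
      ∀ z ∈ S, σ {b | (y₀ * z) * b ∈ C} = σ {b | y₀ * b ∈ C} := by
    intro C hC y₀ hb
    set M : ℝ≥0∞ := σ {b | y₀ * b ∈ C} with hMdef
    have hMne : M ≠ ⊤ := measure_ne_top σ _
    set T : Set G := {b | y₀ * b ∈ C} with hT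
    have hTm : MeasurableSet T := (continuous_mul_left y₀).measurable hC.isClosed.measurableSet
    set w : G → ℝ≥0∞ := fun a => σ {b | g (a, b) ∈ T} with hw
    have hwmeas : Measurable w := measurable_measure_prodMk_left (hgmeas hTm)
    have hwint : ∫⁻ a, w a ∂σ = M := (harm T hTm).symm
    have hw_u : ∀ᵐ a ∂σ, w a = σ {b | (y₀ * a) * b ∈ C} := by
      filter_upwards [hsect] with a ha
      rw [hw]
      simp only
      rw [ha T]
      congr 1
      ext b
      simp [hT, mul_assoc]
    have hwle : ∀ᵐ a ∂σ, w a ≤ M := by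
      filter_upwards [hw_u, hSae] with a ha haS
      rw [ha]
      exact hb a haS
    have hsub0 : ∫⁻ a, (M - w a) ∂σ = 0 := by
      rw [lintegral_sub hwmeas (by rw [hwint]; exact hMne) hwle, hwint, lintegral_const,
        measure_univ, mul_one, tsub_self]
    have hae0 : ∀ᵐ a ∂σ, M - w a = 0 :=
      (lintegral_eq_zero_iff (measurable_const.sub hwmeas)).1 hsub0
    have haeM : ∀ᵐ a ∂σ, σ {b | (y₀ * a) * b ∈ C} = M := by
      filter_upwards [hae0, hwle, hw_u] with a h0 hle hu
      rw [← hu]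
      exact le_antisymm hle (by rwa [tsub_eq_zero_iff_le] at h0)
    set E : Set G := {z | M ≤ σ {b | (y₀ * z) * b ∈ C}} with hE
    have hEcl : IsClosed E := by
      have : E = (fun z => y₀ * z) ⁻¹' {y | M ≤ σ {b | y * b ∈ C}} := rfl
      rw [this]
      exact (KIclosed_superlevel σ hC M).preimage (continuous_mul_left y₀)
    have hEnull : σ Eᶜ = 0 := by
      refine measure_mono_null ?_ (MeasureTheory.ae_iff.1 haeM)
      intro z hz
      simp only [hE, mem_compl_iff, mem_setOf_eq, not_le] at hz
      simp only [mem_setOf_eq]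
      exact ne_of_lt hz
    have hSE : S ⊆ E := by
      intro z hz
      by_contra hzE
      have := hz Eᶜ hEcl.isOpen_compl hzE
      rw [hEnull] at this
      exact lt_irrefl 0 this
    intro z hz
    exact le_antisymm (hb z hz) (hSE hz)
  -- an auxiliary fact: two sets with total measure > 1 intersect
  have inter_ne : ∀ A B : Set G, MeasurableSet B → 1 < σ A + σ B → (A ∩ B).Nonempty := by
    intro A B hB h
    apply nonempty_of_measure_ne_zero (μ := σ)
    intro h0
    have h1 : σ A + σ B = σ (A ∪ B) + σ (A ∩ B) := (measure_union_add_inter A hB).symm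
    rw [h0, add_zero] at h1
    rw [h1] at h
    exact absurd (prob_le_one (μ := σ) (s := A ∪ B)) (not_le.2 h)
  -- choose a compact set C₀ of measure > 1/2
  obtain ⟨C₀, _, hC₀c, hC₀half⟩ :=
    Measure.Regular.innerRegular (μ := σ) isOpen_univ 2⁻¹
      (by rw [measure_univ]; exact ENNReal.inv_lt_one.2 ENNReal.one_lt_two)
  -- the superlevel set K₀ is compact
  have hK₀cl : IsClosed {y : G | σ C₀ ≤ σ {b | y * b ∈ C₀}} := KIclosed_superlevel σ hC₀c _
  have hhalf : ∀ y : G, 2⁻¹ < σ {b | y * b ∈ C₀} → (∃ c₁ ∈ C₀, ∃ c₂ ∈ C₀, y * c₁ = c₂) := by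
    intro y hy
    have hint : ({b | y * b ∈ C₀} ∩ C₀).Nonempty := by
      apply inter_ne _ _ hC₀c.isClosed.measurableSet
      calc (1:ℝ≥0∞) = 2⁻¹ + 2⁻¹ := by rw [ENNReal.inv_two_add_inv_two]
        _ < σ {b | y * b ∈ C₀} + σ C₀ := by
            exact ENNReal.add_lt_add hy hC₀half
    obtain ⟨b, hb1, hb2⟩ := hint
    exact ⟨b, hb2, y * b, hb1, rfl⟩
  have hK₀sub : {y : G | σ C₀ ≤ σ {b | y * b ∈ C₀}} ⊆
      (fun p : G × G => p.2 * p.1⁻¹) '' (C₀ ×ˢ C₀) := by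
    intro y hy
    obtain ⟨c₁, hc₁, c₂, hc₂, hyc⟩ := hhalf y (lt_of_lt_of_le hC₀half hy)
    exact ⟨(c₁, c₂), Set.mk_mem_prod hc₁ hc₂, by simp [← hyc]⟩
  have hQ₀c : IsCompact ((fun p : G × G => p.2 * p.1⁻¹) '' (C₀ ×ˢ C₀)) :=
    (hC₀c.prod hC₀c).image (continuous_snd.mul continuous_fst.inv)
  have hK₀comp : IsCompact {y : G | σ C₀ ≤ σ {b | y * b ∈ C₀}} :=
    hQ₀c.of_isClosed_subset hK₀cl hK₀sub
  have h1K₀ : (1:G) ∈ {y : G | σ C₀ ≤ σ {b | y * b ∈ C₀}} := by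
    simp only [mem_setOf_eq, one_mul]
    exact le_refl _
  -- attain the global maximum
  obtain ⟨y₀, hy₀K₀, hy₀max⟩ := KIattain σ hC₀c hK₀comp ⟨1, h1K₀⟩
  set M₀ : ℝ≥0∞ := σ {b | y₀ * b ∈ C₀} with hM₀
  have hM₀ge : σ C₀ ≤ M₀ := by simpa using hy₀max 1 h1K₀
  have hglobal : ∀ y : G, σ {b | y * b ∈ C₀} ≤ M₀ := by
    intro y
    by_cases hy : y ∈ {y : G | σ C₀ ≤ σ {b | y * b ∈ C₀}}
    · exact hy₀max y hy
    · simp only [mem_setOf_eq, not_le] at hy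
      exact le_trans (le_of_lt hy) hM₀ge
  have hcore₀ : ∀ z ∈ S, σ {b | (y₀ * z) * b ∈ C₀} = M₀ :=
    core C₀ hC₀c y₀ (fun z _ => hglobal (y₀ * z))
  -- S is contained in a compact set
  have hM₀half : 2⁻¹ < M₀ := lt_of_lt_of_le hC₀half hM₀ge
  have hSsub : S ⊆ (fun p : G × G => y₀⁻¹ * p.1 * p.2⁻¹ * y₀) '' (C₀ ×ˢ C₀) := by
    intro z hz
    have h1 : σ {b | (y₀ * z) * b ∈ C₀} = M₀ := hcore₀ z hz
    have hint : ({b | (y₀ * z) * b ∈ C₀} ∩ {b | y₀ * b ∈ C₀}).Nonempty := by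
      apply inter_ne _ _ ((continuous_mul_left y₀).measurable hC₀c.isClosed.measurableSet)
      calc (1:ℝ≥0∞) = 2⁻¹ + 2⁻¹ := by rw [ENNReal.inv_two_add_inv_two]
        _ < σ {b | (y₀ * z) * b ∈ C₀} + σ {b | y₀ * b ∈ C₀} := by
            rw [h1]
            exact ENNReal.add_lt_add hM₀half hM₀half
    obtain ⟨b, hb1, hb2⟩ := hint
    refine ⟨(y₀ * z * b, y₀ * b), Set.mk_mem_prod hb1 hb2, ?_⟩
    simp only
    group
  have hQc : IsCompact ((fun p : G × G => y₀⁻¹ * p.1 * p.2⁻¹ * y₀) '' (C₀ ×ˢ C₀)) :=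
    (hC₀c.prod hC₀c).image (by continuity)
  have hScomp : IsCompact S := hQc.of_isClosed_subset hScl hSsub
  -- S contains 1
  have h1S : (1:G) ∈ S := by
    obtain ⟨m, hmS, hm⟩ := exists_idempotent_in_compact_subsemigroup
      (fun r => continuous_mul_right r) S hSne hScomp hmulS
    have : m = 1 := by
      have := mul_left_cancel (a := m) (b := m) (c := 1) (by rw [mul_one]; exact hm)
      exact this
    rwa [this] at hmS
  have hpowS : ∀ x ∈ S, ∀ n : ℕ, x ^ n ∈ S := by
    intro x hx n
    induction n with
    | zero => simpa using h1S
    | succ n ih => rw [pow_succ]; exact hmulS _ ih _ hx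
  -- S is closed under inversion
  have hinvS : ∀ x ∈ S, x⁻¹ ∈ S := by
    intro x hx
    set T : Set G := closure (Set.range fun n : ℕ => x ^ (n + 1)) with hTdef
    have hrange : (Set.range fun n : ℕ => x ^ (n + 1)) ⊆ S := by
      rintro _ ⟨n, rfl⟩
      exact hpowS x hx (n + 1)
    have hTS : T ⊆ S := closure_minimal hrange hScl
    have hTcomp : IsCompact T := hScomp.of_isClosed_subset isClosed_closure hTS
    have hTne : T.Nonempty := ⟨x, subset_closure ⟨0, by simp⟩⟩
    have hTmul : ∀ a ∈ T, ∀ b ∈ T, a * b ∈ T := by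
      intro a ha b hb
      exact map_mem_closure₂ continuous_mul ha hb (by
        rintro _ ⟨m, rfl⟩ _ ⟨n, rfl⟩
        exact ⟨m + n + 1, by rw [← pow_add]; ring_nf⟩)
    obtain ⟨e, heT, he⟩ := exists_idempotent_in_compact_subsemigroup
      (fun r => continuous_mul_right r) T hTne hTcomp hTmul
    have he1 : e = 1 := mul_left_cancel (a := e) (b := e) (c := 1) (by rw [mul_one]; exact he)
    have h1T : (1:G) ∈ T := he1 ▸ heT
    have := map_mem_closure (continuous_mul_left x⁻¹) h1T (t := S) (by
      rintro _ ⟨n, rfl⟩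
      show x⁻¹ * x ^ (n + 1) ∈ S
      have heq : x⁻¹ * x ^ (n + 1) = x ^ n := by
        rw [pow_succ']
        simp [← mul_assoc]
      rw [heq]
      exact hpowS x hx n)
    rw [hScl.closure_eq] at this
    simpa using this
  -- invariance on compact sets
  have hinv_cpt : ∀ x ∈ S, ∀ C : Set G, IsCompact C → σ {b | x * b ∈ C} = σ C := by
    intro x hx C hC
    obtain ⟨y₁, hy₁S, hy₁max⟩ := KIattain σ hC hScomp hSne
    have hcoreC : ∀ z ∈ S, σ {b | (y₁ * z) * b ∈ C} = σ {b | y₁ * b ∈ C} :=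
      core C hC y₁ (fun z hz => hy₁max (y₁ * z) (hmulS _ hy₁S _ hz))
    have hxval : σ {b | x * b ∈ C} = σ {b | y₁ * b ∈ C} := by
      have hz : y₁⁻¹ * x ∈ S := hmulS _ (hinvS _ hy₁S) _ hx
      have := hcoreC _ hz
      rw [show y₁ * (y₁⁻¹ * x) = x by group] at this
      exact this
    have h1val : σ C = σ {b | y₁ * b ∈ C} := by
      have := hcoreC _ (hinvS _ hy₁S)
      rw [show y₁ * y₁⁻¹ = (1:G) by group] at this
      simpa using this
    rw [hxval, h1val]
  -- invariance on open sets, then all measurable sets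
  have hinv_open_le : ∀ x ∈ S, ∀ U : Set G, IsOpen U → σ U ≤ σ {b | x * b ∈ U} := by
    intro x hx U hU
    apply le_of_forall_lt
    intro r hr
    obtain ⟨K, hKU, hKc, hKr⟩ := Measure.Regular.innerRegular (μ := σ) hU r hr
    calc r < σ K := hKr
      _ = σ {b | x * b ∈ K} := (hinv_cpt x hx K hKc).symm
      _ ≤ σ {b | x * b ∈ U} := measure_mono fun b hb => hKU hb
  have hinv_open : ∀ x ∈ S, ∀ U : Set G, IsOpen U → σ {b | x * b ∈ U} = σ U := by
    intro x hx U hU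
    refine le_antisymm ?_ (hinv_open_le x hx U hU)
    have hU' : IsOpen {b | x * b ∈ U} := hU.preimage (continuous_mul_left x)
    have := hinv_open_le x⁻¹ (hinvS x hx) _ hU'
    refine le_trans this (le_of_eq ?_)
    congr 1
    ext b
    simp [← mul_assoc]
  have hinv_meas : ∀ x ∈ S, ∀ B : Set G, MeasurableSet B → σ {b | x * b ∈ B} = σ B := by
    have hle : ∀ x ∈ S, ∀ B : Set G, MeasurableSet B → σ {b | x * b ∈ B} ≤ σ B := by
      intro x hx B hB
      rw [Set.measure_eq_iInf_isOpen B σ]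
      refine le_iInf fun U => le_iInf fun hBU => le_iInf fun hUo => ?_
      calc σ {b | x * b ∈ B} ≤ σ {b | x * b ∈ U} := measure_mono fun b hb => hBU hb
        _ = σ U := hinv_open x hx U hUo
    intro x hx B hB
    refine le_antisymm (hle x hx B hB) ?_
    have hB' : MeasurableSet {b | x * b ∈ B} := (continuous_mul_left x).measurable hB
    have := hle x⁻¹ (hinvS x hx) _ hB'
    refine le_trans (le_of_eq ?_) this
    congr 1
    ext b
    simp [← mul_assoc]
  -- assemble the subgroup
  refine ⟨{ carrier := S, one_mem' := h1S, mul_mem' := fun {a b} ha hb => hmulS a ha b hb,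
            inv_mem' := fun {a} ha => hinvS a ha }, hScomp, hSone, ?_, ?_, hScompl⟩
  · intro x hx
    apply Measure.ext
    intro B hB
    rw [Measure.map_apply (continuous_mul_left x).measurable hB]
    exact hinv_meas x hx B hB
  · rintro U hU ⟨x, hxU, hxS⟩
    exact hxS U hU hxU
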